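/- arXiv:1412.0728 — 2 statements merged into one kernel-verified Lean document; each statement's English description precedes it below -/
import Mathlib

section
/- Let θ < 0.5 and h > 4, and let (v_1, ..., v_n) be a proper θ-thin sequence in R^2 whose edge sequence is h-decreasing. Then (1 − 2/h)^n · Σ_{k=2}^{n-1} β(v_{k-1}, v_k, v_{k+1}) ≤ β(v_1, v_{n-1}, v_n) ≤ Σ_{k=2}^{n-1} β(v_{k-1}, v_k, v_{k+1}). -/
open EuclideanGeometry Real Finset

noncomputable section

/-- Points of the plane. -/
abbrev Pt : Type := EuclideanSpace ℝ (Fin 2)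

/-- `Δ(a,b,c)`: the oriented area of the parallelepiped spanned by `a - b` and `c - b`. -/
def tdet (a b c : Pt) : ℝ :=
  (a 0 - b 0) * (c 1 - b 1) - (a 1 - b 1) * (c 0 - b 0)

/-- `β(a,b,c) = π - ∠(a,b,c)`, where `∠` is the unsigned angle at `b`. -/
def beta (a b c : Pt) : ℝ := Real.pi - EuclideanGeometry.angle a b c

/-- Cyclic successor on `{1, …, n}`. -/
def cyc (n j : ℕ) : ℕ := if j = n then 1 else j + 1

/-- Cyclic predecessor on `{1, …, n}`. -/
def cycPred (n j : ℕ) : ℕ := if j = 1 then n else j - 1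

/-- `(v 1, …, v n)` is a proper sequence: `Δ(v₁,v₂,v₃) > 0` and every segment
`conv{v_j, v_{j+1}}` (indices cyclic) is an edge of the convex hull of the points,
i.e. it is the set of maximizers of some linear functional over the points. -/
def Proper (n : ℕ) (v : ℕ → Pt) : Prop :=
  0 < tdet (v 1) (v 2) (v 3) ∧
  ∀ j, 1 ≤ j → j ≤ n →
    ∃ (ℓ : Pt →ₗ[ℝ] ℝ) (c : ℝ), ℓ (v j) = c ∧ ℓ (v (cyc n j)) = c ∧
      ∀ k, 1 ≤ k → k ≤ n → k ≠ j → k ≠ cyc n j → ℓ (v k) < c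

/-- `(v 1, …, v n)` is `θ`-thin. -/
def Thin (n : ℕ) (v : ℕ → Pt) (θ : ℝ) : Prop :=
  ∑ k ∈ Finset.Icc 2 (n - 1), beta (v (k - 1)) (v k) (v (k + 1)) ≤ θ

/-- The edge sequence of `(v 1, …, v n)` is `h`-decreasing. -/
def EdgeDecr (n : ℕ) (v : ℕ → Pt) (h : ℝ) : Prop :=
  ∀ k, 1 ≤ k → k + 2 ≤ n → h * dist (v (k + 1)) (v (k + 2)) ≤ dist (v k) (v (k + 1))


/-! ### Auxiliary machinery -/

/-- The complex number associated to a planar point. -/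
def cpt (p : Pt) : ℂ := ⟨p 0, p 1⟩

lemma cpt_inj {p q : Pt} (h : cpt p = cpt q) : p = q := by
  ext i
  fin_cases i
  · exact congrArg Complex.re h
  · exact congrArg Complex.im h

lemma dist_eq_abs (a b : Pt) : dist a b = ‖cpt a - cpt b‖ := by
  rw [EuclideanSpace.dist_eq, Complex.norm_def, Complex.normSq_apply]
  simp [Complex.sub_re, Complex.sub_im, cpt, Fin.sum_univ_two, Real.dist_eq, sq_abs]
  ring_nf

lemma tdet_eq_im (a b c : Pt) :
    tdet a b c = ((starRingEnd ℂ) (cpt a - cpt b) * (cpt c - cpt b)).im := by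
  simp [tdet, Complex.mul_im, Complex.sub_re, Complex.sub_im, cpt]
  ring

lemma inner_eq_pt (a b : Pt) : (inner ℝ a b : ℝ) = a 0 * b 0 + a 1 * b 1 := by
  simp [PiLp.inner_apply, Fin.sum_univ_two]
  ring

lemma angle_eq_abs_arg {a b c : Pt} (hab : a ≠ b) (hcb : c ≠ b) :
    EuclideanGeometry.angle a b c = |Complex.arg ((cpt c - cpt b) / (cpt a - cpt b))| := by
  have hu : cpt a - cpt b ≠ 0 := sub_ne_zero.2 (fun h => hab (cpt_inj h))
  have hw : cpt c - cpt b ≠ 0 := sub_ne_zero.2 (fun h => hcb (cpt_inj h))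
  have hq : (cpt c - cpt b) / (cpt a - cpt b) ≠ 0 := div_ne_zero hw hu
  apply Real.injOn_cos
    (Set.mem_Icc.2 ⟨EuclideanGeometry.angle_nonneg _ _ _, EuclideanGeometry.angle_le_pi _ _ _⟩)
    (Set.mem_Icc.2 ⟨abs_nonneg _, Complex.abs_arg_le_pi _⟩)
  rw [Real.cos_abs, Complex.cos_arg hq]
  rw [EuclideanGeometry.angle, InnerProductGeometry.cos_angle]
  rw [Complex.div_re, norm_div]
  have h1 : (inner ℝ (a -ᵥ b) (c -ᵥ b) : ℝ) =
      ((cpt c - cpt b).re * (cpt a - cpt b).re + (cpt c - cpt b).im * (cpt a - cpt b).im) := by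
    rw [inner_eq_pt]
    simp [Complex.sub_re, Complex.sub_im, cpt]
    ring
  have h2 : ‖a -ᵥ b‖ = ‖cpt a - cpt b‖ := by
    rw [← dist_eq_abs]; exact (dist_eq_norm_vsub _ a b).symm
  have h3 : ‖c -ᵥ b‖ = ‖cpt c - cpt b‖ := by
    rw [← dist_eq_abs]; exact (dist_eq_norm_vsub _ c b).symm
  rw [h1, h2, h3, Complex.normSq_apply]
  have hau : ‖cpt a - cpt b‖ ≠ 0 := norm_ne_zero_iff.mpr hu
  have hcu : ‖cpt c - cpt b‖ ≠ 0 := norm_ne_zero_iff.mpr hw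
  have hsq : (cpt a - cpt b).re * (cpt a - cpt b).re + (cpt a - cpt b).im * (cpt a - cpt b).im
      = ‖cpt a - cpt b‖ ^ 2 := by
    rw [← Complex.normSq_apply, Complex.sq_norm]
  rw [hsq]
  field_simp

lemma arg_pos_of_im_pos {z : ℂ} (h : 0 < z.im) : 0 < Complex.arg z := by
  rcases lt_or_eq_of_le (Complex.arg_nonneg_iff.2 h.le) with h' | h'
  · exact h'
  · exfalso
    have := (Complex.arg_eq_zero_iff.1 h'.symm).2
    linarith

lemma abs_arg_neg (u : ℂ) (hu : u ≠ 0) : |Complex.arg (-u)| = π - |Complex.arg u| := by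
  rcases lt_trichotomy u.im 0 with h | h | h
  · rw [Complex.arg_neg_eq_arg_add_pi_of_im_neg h]
    have h1 : Complex.arg u < 0 := Complex.arg_neg_iff.2 h
    have h2 : -π < Complex.arg u := Complex.neg_pi_lt_arg u
    rw [abs_of_pos (by linarith), abs_of_neg h1]
    ring
  · rcases lt_trichotomy u.re 0 with hr | hr | hr
    · have h1 : Complex.arg u = π := Complex.arg_eq_pi_iff.2 ⟨hr, h⟩
      have h2 : Complex.arg (-u) = 0 := Complex.arg_eq_zero_iff.2 ⟨by simp; linarith, by simp [h]⟩
      rw [h1, h2, abs_of_nonneg pi_pos.le]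
      simp
    · exfalso
      apply hu
      apply Complex.ext <;> simp [hr, h]
    · have h1 : Complex.arg u = 0 := Complex.arg_eq_zero_iff.2 ⟨hr.le, h⟩
      have h2 : Complex.arg (-u) = π := Complex.arg_eq_pi_iff.2 ⟨by simp [hr], by simp [h]⟩
      rw [h1, h2, abs_of_nonneg pi_pos.le]
      simp
  · rw [Complex.arg_neg_eq_arg_sub_pi_of_im_pos h]
    have h1 : 0 < Complex.arg u := arg_pos_of_im_pos h
    have h2 : Complex.arg u ≤ π := Complex.arg_le_pi u
    rw [abs_of_nonpos (by linarith), abs_of_pos h1]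
    ring

lemma abs_arg_conj (u : ℂ) : |Complex.arg ((starRingEnd ℂ) u)| = |Complex.arg u| := by
  rw [Complex.arg_conj]
  split
  · next h => rw [h]
  · rw [abs_neg]

lemma beta_eq_abs_arg {a b c : Pt} (h1 : b ≠ a) (h2 : c ≠ b) :
    beta a b c = |Complex.arg ((cpt c - cpt b) / (cpt b - cpt a))| := by
  have hu : cpt a - cpt b ≠ 0 := sub_ne_zero.2 (fun h => h1 (cpt_inj h).symm)
  have hw : cpt c - cpt b ≠ 0 := sub_ne_zero.2 (fun h => h2 (cpt_inj h))
  have hq : (cpt c - cpt b) / (cpt a - cpt b) ≠ 0 := div_ne_zero hw hu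
  have hneg : (cpt c - cpt b) / (cpt b - cpt a) = -((cpt c - cpt b) / (cpt a - cpt b)) := by
    rw [← div_neg, neg_sub]
  rw [beta, angle_eq_abs_arg (fun h => h1 h.symm) h2, hneg, abs_arg_neg _ hq]

lemma geo_bound {h : ℝ} (hh : 1 < h) :
    ∀ j : ℕ, (∑ k ∈ Finset.Icc 2 (j+1), (1/h)^(k-1)) * (h-1) ≤ 1 - (1/h)^j := by
  intro j
  induction j with
  | zero => simp
  | succ j ih =>
    rw [Finset.sum_Icc_succ_top (by omega), add_mul]
    have e1 : (1/h)^(j+1+1-1) = (1/h)^(j+1) := by norm_num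
    rw [e1]
    have hr : (1/h)^(j+1) * h = (1/h)^j := by
      rw [pow_succ]; field_simp
    nlinarith [ih]

lemma tele_sum (g : ℕ → ℂ) : ∀ m : ℕ, ∑ k ∈ Finset.Icc 1 m, (g (k+1) - g k) = g (m+1) - g 1 := by
  intro m
  induction m with
  | zero => simp
  | succ m ih =>
    rw [Finset.sum_Icc_succ_top (by omega), ih]
    ring
lemma core (n : ℕ) (hn : 3 ≤ n) (θ h : ℝ) (hθ : θ < 0.5) (hh : 4 < h)
    (e : ℕ → ℂ)
    (hpos : ∀ k, 2 ≤ k → k ≤ n - 1 → 0 < ((starRingEnd ℂ) (e (k-1)) * e k).im)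
    (hB : ∑ k ∈ Finset.Icc 2 (n-1), |Complex.arg (e k / e (k-1))| ≤ θ)
    (hdec : ∀ k, 1 ≤ k → k + 2 ≤ n → h * ‖e (k+1)‖ ≤ ‖e k‖) :
    (∑ k ∈ Finset.Icc 1 (n-2), e k) ≠ 0 ∧
    (1 - 2/h) ^ n * (∑ k ∈ Finset.Icc 2 (n-1), |Complex.arg (e k / e (k-1))|) ≤
      |Complex.arg (e (n-1) / (∑ k ∈ Finset.Icc 1 (n-2), e k))| ∧
    |Complex.arg (e (n-1) / (∑ k ∈ Finset.Icc 1 (n-2), e k))| ≤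
      ∑ k ∈ Finset.Icc 2 (n-1), |Complex.arg (e k / e (k-1))| := by
  have hpi2 : (1:ℝ)/2 < π/2 := by linarith [Real.pi_gt_three]
  have hh0 : (0:ℝ) < h := by linarith
  -- all edges nonzero
  have hne : ∀ k, 1 ≤ k → k ≤ n - 1 → e k ≠ 0 := by
    intro k hk1 hk2 he
    rcases eq_or_lt_of_le hk2 with h' | h'
    · subst h'
      have := hpos (n-1) (by omega) le_rfl
      rw [he] at this
      simp at this
    · have := hpos (k+1) (by omega) (by omega)
      rw [show k + 1 - 1 = k from rfl, he] at this
      simp at this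
  -- positivity of each turning angle
  have harg : ∀ k, 2 ≤ k → k ≤ n - 1 → 0 < Complex.arg (e k / e (k-1)) := by
    intro k hk1 hk2
    have h1 := hpos k hk1 hk2
    have h2 : 0 < Complex.normSq (e (k-1)) :=
      Complex.normSq_pos.2 (hne (k-1) (by omega) (by omega))
    apply arg_pos_of_im_pos
    rw [Complex.div_im, div_sub_div_same]
    apply div_pos ?_ h2
    rw [Complex.mul_im, Complex.conj_re, Complex.conj_im] at h1
    linarith
  -- sum of signed angles equals sum of unsigned angles
  set A := ∑ k ∈ Finset.Icc 2 (n-1), Complex.arg (e k / e (k-1)) with hAdef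
  have hAeq : (∑ k ∈ Finset.Icc 2 (n-1), |Complex.arg (e k / e (k-1))|) = A := by
    apply Finset.sum_congr rfl
    intro k hk
    rw [Finset.mem_Icc] at hk
    exact abs_of_pos (harg k hk.1 hk.2)
  rw [hAeq] at hB ⊢
  have hA0 : 0 ≤ A := by
    apply Finset.sum_nonneg
    intro k hk
    rw [Finset.mem_Icc] at hk
    exact (harg k hk.1 hk.2).le
  -- partial sums
  set c : ℕ → ℝ := fun m => ∑ k ∈ Finset.Icc 2 m, Complex.arg (e k / e (k-1)) with hcdef
  have hcA : ∀ m, m ≤ n - 1 → c m ≤ A := by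
    intro m hm
    apply Finset.sum_le_sum_of_subset_of_nonneg
    · exact Finset.Icc_subset_Icc_right hm
    · intro k hk _
      rw [Finset.mem_Icc] at hk
      exact (harg k hk.1 hk.2).le
  have hc0 : ∀ m, m ≤ n - 1 → 0 ≤ c m := by
    intro m hm
    apply Finset.sum_nonneg
    intro k hk
    rw [Finset.mem_Icc] at hk
    exact (harg k hk.1 (le_trans hk.2 hm)).le
  -- cumulative argument identity
  have hcum : ∀ m, 1 ≤ m → m ≤ n - 1 → Complex.arg (e m / e 1) = c m := by
    intro m hm1
    induction m, hm1 using Nat.le_induction with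
    | base =>
      intro _
      rw [div_self (hne 1 (by omega) (by omega))]
      simp [hcdef, Complex.arg_one, Finset.Icc_eq_empty (by omega : ¬ (2:ℕ) ≤ 1)]
    | succ m hm ih =>
      intro hm2
      have hmn : m ≤ n - 1 := by omega
      have h1 : e (m+1) / e 1 = (e (m+1) / e m) * (e m / e 1) := by
        rw [div_mul_div_comm, mul_comm (e (m+1)) (e m),
          mul_div_mul_left _ _ (hne m (by omega) hmn)]
      have hx : e (m+1) / e m ≠ 0 :=
        div_ne_zero (hne (m+1) (by omega) hm2) (hne m (by omega) hmn)
      have hy : e m / e 1 ≠ 0 :=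
        div_ne_zero (hne m (by omega) hmn) (hne 1 (by omega) (by omega))
      have hcsucc : c (m+1) = c m + Complex.arg (e (m+1) / e m) := by
        rw [hcdef]
        simp only
        rw [Finset.sum_Icc_succ_top (by omega)]
        norm_num
      have hsum_mem : Complex.arg (e (m+1) / e m) + Complex.arg (e m / e 1) ∈ Set.Ioc (-π) π := by
        constructor
        · have ha := harg (m+1) (by omega) hm2
          norm_num at ha
          have hb := hc0 m hmn
          rw [ih hmn]
          have : (0:ℝ) < π := Real.pi_pos
          linarith
        · rw [ih hmn]
          have hc1 : c m + Complex.arg (e (m+1) / e m) ≤ A := by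
            rw [← hcsucc]; exact hcA (m+1) hm2
          linarith [Real.pi_gt_three]
      rw [h1, (Complex.arg_mul_eq_add_arg_iff hx hy).2 hsum_mem, ih hmn, hcsucc]
      ring
  -- the sum S and its normalized version q
  set S := ∑ k ∈ Finset.Icc 1 (n-2), e k with hSdef
  have he1 : e 1 ≠ 0 := hne 1 (by omega) (by omega)
  set q := S / e 1 with hqdef
  have hq_sum : q = ∑ k ∈ Finset.Icc 1 (n-2), e k / e 1 := by
    rw [hqdef, hSdef, Finset.sum_div]
  -- each term has nonneg real and imaginary parts
  have hterm : ∀ k, k ∈ Finset.Icc 1 (n-2) →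
      0 ≤ (e k / e 1).re ∧ 0 ≤ (e k / e 1).im ∧
      (e k / e 1).im ≤ ‖e k / e 1‖ * c k := by
    intro k hk
    rw [Finset.mem_Icc] at hk
    have hkn : k ≤ n - 1 := by omega
    have hzk : e k / e 1 ≠ 0 := div_ne_zero (hne k (by omega) hkn) he1
    have hargk : Complex.arg (e k / e 1) = c k := hcum k hk.1 hkn
    have hck0 : 0 ≤ c k := hc0 k hkn
    have hckθ : c k ≤ θ := le_trans (hcA k hkn) hB
    have hcos : 0 < Real.cos (c k) := by
      apply Real.cos_pos_of_mem_Ioo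
      constructor
      · have : (0:ℝ) < π := Real.pi_pos
        linarith
      · norm_num at hθ; linarith
    have habs0 : ‖e k / e 1‖ ≠ 0 := norm_ne_zero_iff.mpr hzk
    have hre : (e k / e 1).re = ‖e k / e 1‖ * Real.cos (c k) := by
      rw [← hargk, Complex.cos_arg hzk, mul_comm, div_mul_cancel₀ _ habs0]
    have him : (e k / e 1).im = ‖e k / e 1‖ * Real.sin (c k) := by
      rw [← hargk, Complex.sin_arg, mul_comm, div_mul_cancel₀ _ habs0]
    have hsin : 0 ≤ Real.sin (c k) := by
      apply Real.sin_nonneg_of_nonneg_of_le_pi hck0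
      norm_num at hθ
      linarith [Real.pi_gt_three]
    refine ⟨?_, ?_, ?_⟩
    · rw [hre]
      exact mul_nonneg (norm_nonneg _) hcos.le
    · rw [him]
      exact mul_nonneg (norm_nonneg _) hsin
    · rw [him]
      exact mul_le_mul_of_nonneg_left (Real.sin_le hck0) (norm_nonneg _)
  -- real part at least 1
  have hqre : 1 ≤ q.re := by
    rw [hq_sum, Complex.re_sum]
    have h1mem : 1 ∈ Finset.Icc 1 (n-2) := by
      rw [Finset.mem_Icc]; omega
    have : (e 1 / e 1).re = 1 := by rw [div_self he1]; simp
    calc (1:ℝ) = (e 1 / e 1).re := this.symm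
      _ ≤ ∑ k ∈ Finset.Icc 1 (n-2), (e k / e 1).re := by
          apply Finset.single_le_sum (fun k hk => (hterm k hk).1) h1mem
  have hq0 : q ≠ 0 := fun hq => by simp [hq] at hqre; linarith
  have hS0 : S ≠ 0 := by
    intro hS
    rw [hqdef, hS] at hqre
    simp at hqre
    linarith
  -- imaginary part bounds
  have hqim0 : 0 ≤ q.im := by
    rw [hq_sum, Complex.im_sum]
    exact Finset.sum_nonneg (fun k hk => (hterm k hk).2.1)
  -- decay of edge lengths
  have habs_le : ∀ k, 1 ≤ k → k ≤ n - 2 → ‖e k‖ ≤ (1/h)^(k-1) * ‖e 1‖ := by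
    intro k hk1
    induction k, hk1 using Nat.le_induction with
    | base => intro _; simp
    | succ k hk ih =>
      intro hk2
      have h1 := hdec k (by omega) (by omega)
      have h2 := ih (by omega)
      have e3 : ‖e (k+1)‖ ≤ (1/h) * ‖e k‖ := by
        rw [one_div, inv_mul_eq_div, le_div_iff₀ hh0]
        linarith [h1]
      have e4 : (1/h) * ‖e k‖ ≤ (1/h) * ((1/h)^(k-1) * ‖e 1‖) := by
        apply mul_le_mul_of_nonneg_left h2 (by positivity)
      have e5 : (1/h:ℝ)^(k+1-1) = (1/h) * (1/h)^(k-1) := by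
        rw [show k + 1 - 1 = (k-1) + 1 by omega, pow_succ]
        ring
      rw [e5]
      calc ‖e (k+1)‖ ≤ (1/h) * ‖e k‖ := e3
        _ ≤ (1/h) * ((1/h)^(k-1) * ‖e 1‖) := e4
        _ = 1/h * (1/h)^(k-1) * ‖e 1‖ := by ring
  -- bound on the imaginary part of q
  have habs1 : 0 < ‖e 1‖ := norm_pos_iff.mpr he1
  have hgeo : (∑ k ∈ Finset.Icc 2 (n-2), (1/h)^(k-1)) ≤ 1/(h-1) := by
    have := geo_bound (show (1:ℝ) < h by linarith) (n-3)
    rw [show n - 3 + 1 = n - 2 by omega] at this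
    have hp : (0:ℝ) ≤ (1/h)^(n-3) := by positivity
    rw [le_div_iff₀ (show (0:ℝ) < h - 1 by linarith)]
    linarith
  have hqim_le : q.im ≤ (1/(h-1)) * A := by
    have hsplit : Finset.Icc 1 (n-2) = insert 1 (Finset.Icc 2 (n-2)) := by
      ext x
      simp only [Finset.mem_Icc, Finset.mem_insert]
      omega
    rw [hq_sum, Complex.im_sum, hsplit, Finset.sum_insert (by simp)]
    have him1 : (e 1 / e 1).im = 0 := by rw [div_self he1]; simp
    rw [him1, zero_add]
    have hstep : ∀ k ∈ Finset.Icc 2 (n-2), (e k / e 1).im ≤ (1/h)^(k-1) * A := by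
      intro k hk
      rw [Finset.mem_Icc] at hk
      have hk' : k ∈ Finset.Icc 1 (n-2) := by rw [Finset.mem_Icc]; omega
      have h1 := (hterm k hk').2.2
      have habsz : ‖e k / e 1‖ ≤ (1/h)^(k-1) := by
        rw [norm_div, div_le_iff₀ habs1]
        exact habs_le k (by omega) hk.2
      have hck0 : 0 ≤ c k := hc0 k (by omega)
      have hckA : c k ≤ A := hcA k (by omega)
      calc (e k / e 1).im ≤ ‖e k / e 1‖ * c k := h1
        _ ≤ (1/h)^(k-1) * A := by
            apply mul_le_mul habsz hckA hck0 (by positivity)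
    calc (∑ k ∈ Finset.Icc 2 (n-2), (e k / e 1).im)
        ≤ ∑ k ∈ Finset.Icc 2 (n-2), (1/h)^(k-1) * A := Finset.sum_le_sum hstep
      _ = (∑ k ∈ Finset.Icc 2 (n-2), (1/h)^(k-1)) * A := by rw [Finset.sum_mul]
      _ ≤ (1/(h-1)) * A := by
          apply mul_le_mul_of_nonneg_right hgeo hA0
  -- the argument of q
  set t := Complex.arg q with htdef
  have ht0 : 0 ≤ t := Complex.arg_nonneg_iff.2 hqim0
  have ht2 : |t| < π/2 := Complex.abs_arg_lt_pi_div_two_iff.2 (Or.inl (by linarith))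
  have htpi2 : t < π/2 := by rw [abs_of_nonneg ht0] at ht2; exact ht2
  have htle : t ≤ q.im := by
    rcases eq_or_lt_of_le ht0 with h' | h'
    · rw [← h']; exact hqim0
    · have h1 : t < Real.tan t := Real.lt_tan h' htpi2
      have h2 : Real.tan t = q.im / q.re := Complex.tan_arg q
      have h3 : q.im / q.re ≤ q.im := div_le_self hqim0 hqre
      linarith
  have ht_le : t ≤ (1/(h-1)) * A := le_trans htle hqim_le
  -- final argument computation
  have hXne : e (n-1) / e 1 ≠ 0 := div_ne_zero (hne (n-1) (by omega) le_rfl) he1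
  have hXarg : Complex.arg (e (n-1) / e 1) = A := hcum (n-1) (by omega) le_rfl
  have hqinv_arg : Complex.arg q⁻¹ = -t := by
    rw [Complex.arg_inv]
    split
    · next h' =>
        exfalso
        rw [htdef] at *
        rw [h'] at ht2
        rw [abs_of_nonneg Real.pi_pos.le] at ht2
        linarith [Real.pi_pos]
    · rfl
  have hfrac : e (n-1) / S = (e (n-1) / e 1) * q⁻¹ := by
    rw [hqdef]
    field_simp
  have hAθ : A ≤ θ := hB
  have harg_final : Complex.arg (e (n-1) / S) = A - t := by
    rw [hfrac]
    rw [(Complex.arg_mul_eq_add_arg_iff hXne (inv_ne_zero hq0)).2 ?_, hXarg, hqinv_arg]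
    · ring
    · rw [hXarg, hqinv_arg]
      constructor
      · have := Real.pi_gt_three
        linarith
      · have := Real.pi_gt_three
        norm_num at hθ
        linarith
  have htA : t ≤ A := by
    have h1 : (1/(h-1)) ≤ 1 := by
      rw [div_le_one (by linarith)]
      linarith
    have h2 : (1/(h-1)) * A ≤ 1 * A := mul_le_mul_of_nonneg_right h1 hA0
    linarith
  have habsfin : |Complex.arg (e (n-1) / S)| = A - t := by
    rw [harg_final, abs_of_nonneg (by linarith)]
  refine ⟨hS0, ?_, ?_⟩
  · rw [habsfin]
    have hb0 : (0:ℝ) ≤ 1 - 2/h := by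
      have : 2/h < 1 := by rw [div_lt_one hh0]; linarith
      linarith
    have hb1 : 1 - 2/h ≤ 1 := by
      have : (0:ℝ) ≤ 2/h := by positivity
      linarith
    have hpow : (1-2/h)^n ≤ (1-2/h)^1 := pow_le_pow_of_le_one hb0 hb1 (by omega)
    rw [pow_one] at hpow
    have key : 1/(h-1) ≤ 2/h := by
      rw [div_le_div_iff₀ (by linarith) hh0]
      linarith
    have k1 : (1/(h-1)) * A ≤ (2/h) * A := mul_le_mul_of_nonneg_right key hA0
    have k2 : (1-2/h)^n * A ≤ (1-2/h) * A := mul_le_mul_of_nonneg_right hpow hA0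
    have k3 : (1-2/h) * A = A - (2/h)*A := by ring
    linarith
  · rw [habsfin]
    linarith
lemma lin_coords (ℓ : Pt →ₗ[ℝ] ℝ) : ∃ α γ : ℝ, ∀ p : Pt, ℓ p = α * p 0 + γ * p 1 := by
  refine ⟨ℓ (EuclideanSpace.single 0 1), ℓ (EuclideanSpace.single 1 1), fun p => ?_⟩
  have hp : p = p 0 • EuclideanSpace.single 0 (1:ℝ) + p 1 • EuclideanSpace.single 1 (1:ℝ) := by
    ext i
    fin_cases i <;> simp [EuclideanSpace.single_apply]
  conv_lhs => rw [hp]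
  rw [map_add, map_smul, map_smul]
  simp [mul_comm]

lemma tdet_rot (a b c : Pt) : tdet b c a = tdet a b c := by
  unfold tdet; ring

lemma same_side (ℓ : Pt →ₗ[ℝ] ℝ) (a b x y : Pt) (hab : ℓ a = ℓ b)
    (hx : ℓ x < ℓ a) (hy : ℓ y < ℓ a) (hpos : 0 < tdet a b x) : 0 < tdet a b y := by
  obtain ⟨α, γ, hc⟩ := lin_coords ℓ
  rw [hc a, hc b] at hab
  rw [hc x, hc a] at hx
  rw [hc y, hc a] at hy
  unfold tdet at hpos ⊢
  have hu : α * (a 0 - b 0) + γ * (a 1 - b 1) = 0 := by linarith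
  have hLx : α * (x 0 - b 0) + γ * (x 1 - b 1) < 0 := by linarith
  have hLy : α * (y 0 - b 0) + γ * (y 1 - b 1) < 0 := by linarith
  have hDD : ((a 0 - b 0) * (x 1 - b 1) - (a 1 - b 1) * (x 0 - b 0)) *
      (α * (y 0 - b 0) + γ * (y 1 - b 1)) =
      ((a 0 - b 0) * (y 1 - b 1) - (a 1 - b 1) * (y 0 - b 0)) *
      (α * (x 0 - b 0) + γ * (x 1 - b 1)) := by
    linear_combination ((x 1 - b 1) * (y 0 - b 0) - (x 0 - b 0) * (y 1 - b 1)) * hu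
  nlinarith [mul_neg_of_pos_of_neg hpos hLy]

lemma tdet_chain (n : ℕ) (hn : 3 ≤ n) (v : ℕ → Pt) (hv : Proper n v) :
    ∀ j, 1 ≤ j → j ≤ n - 2 → 0 < tdet (v j) (v (j+1)) (v (j+2)) := by
  intro j hj1
  induction j, hj1 using Nat.le_induction with
  | base => intro _; exact hv.1
  | succ j hj ih =>
    intro hj2
    have hT := ih (by omega)
    obtain ⟨ℓ, cst, h1, h2, h3⟩ := hv.2 (j+1) (by omega) (by omega)
    have hcyc : cyc n (j+1) = j+2 := by
      unfold cyc
      rw [if_neg (by omega)]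
    rw [hcyc] at h2 h3
    have hx := h3 j (by omega) (by omega) (by omega) (by omega)
    have hy := h3 (j+3) (by omega) (by omega) (by omega) (by omega)
    rw [← h1] at hx hy
    have hT' : 0 < tdet (v (j+1)) (v (j+2)) (v j) := by
      rw [tdet_rot]; exact hT
    have := same_side ℓ (v (j+1)) (v (j+2)) (v j) (v (j+3)) (h1.trans h2.symm) hx hy hT'
    convert this using 2 <;> omega

/-- Bounds for `β(v₁, v_{n-1}, v_n)` in terms of the sum of the angles of a
proper `θ`-thin sequence (`θ < 0.5`) whose edge sequence is `h`-decreasing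
(`h > 4`). -/
theorem stmt11 (n : ℕ) (hn : 3 ≤ n) (θ h : ℝ) (hθ : θ < 0.5) (hh : 4 < h)
    (v : ℕ → Pt) (hv : Proper n v) (hthin : Thin n v θ) (hedge : EdgeDecr n v h) :
    (1 - 2 / h) ^ n * ∑ k ∈ Finset.Icc 2 (n - 1), beta (v (k - 1)) (v k) (v (k + 1)) ≤
        beta (v 1) (v (n - 1)) (v n) ∧
      beta (v 1) (v (n - 1)) (v n) ≤
        ∑ k ∈ Finset.Icc 2 (n - 1), beta (v (k - 1)) (v k) (v (k + 1)) := by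
  have hchain := tdet_chain n hn v hv
  set e : ℕ → ℂ := fun k => (starRingEnd ℂ) (cpt (v (k+1)) - cpt (v k)) with he
  have hne_pt : ∀ k, 2 ≤ k → k ≤ n - 1 → (v (k-1) ≠ v k ∧ v (k+1) ≠ v k) := by
    intro k hk2 hk1
    have hT := hchain (k-1) (by omega) (by omega)
    rw [show k-1+1 = k by omega, show k-1+2 = k+1 by omega] at hT
    constructor
    · intro hEq
      rw [hEq] at hT
      simp [tdet, sub_self] at hT
    · intro hEq
      rw [hEq] at hT
      simp [tdet, sub_self] at hT
  have hpos : ∀ k, 2 ≤ k → k ≤ n - 1 → 0 < ((starRingEnd ℂ) (e (k-1)) * e k).im := by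
    intro k hk2 hk1
    have hT := hchain (k-1) (by omega) (by omega)
    rw [show k-1+1 = k by omega, show k-1+2 = k+1 by omega] at hT
    rw [tdet_eq_im] at hT
    simp only [he]
    rw [show k-1+1 = k by omega]
    simp only [Complex.mul_im, Complex.conj_re, Complex.conj_im, Complex.sub_re,
      Complex.sub_im] at hT ⊢
    ring_nf at hT ⊢
    linarith
  have habs_e : ∀ j : ℕ, ‖e j‖ = dist (v j) (v (j+1)) := by
    intro j
    simp only [he]
    rw [Complex.norm_conj, dist_eq_abs, ← neg_sub, norm_neg]
  have hdec' : ∀ k, 1 ≤ k → k + 2 ≤ n → h * ‖e (k+1)‖ ≤ ‖e k‖ := by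
    intro k hk1 hk2
    rw [habs_e, habs_e, show k+1+1 = k+2 by omega]
    exact hedge k hk1 hk2
  have hsum_eq : ∑ k ∈ Finset.Icc 2 (n - 1), beta (v (k - 1)) (v k) (v (k + 1))
      = ∑ k ∈ Finset.Icc 2 (n-1), |Complex.arg (e k / e (k-1))| := by
    apply Finset.sum_congr rfl
    intro k hk
    rw [Finset.mem_Icc] at hk
    obtain ⟨hd1, hd2⟩ := hne_pt k hk.1 hk.2
    rw [beta_eq_abs_arg (fun hEq => hd1 hEq.symm) hd2]
    have hq : e k / e (k-1)
        = (starRingEnd ℂ) ((cpt (v (k+1)) - cpt (v k)) / (cpt (v k) - cpt (v (k-1)))) := by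
      simp only [he]
      rw [show k-1+1 = k by omega, map_div₀]
    rw [hq, abs_arg_conj]
  have hthin' : ∑ k ∈ Finset.Icc 2 (n-1), |Complex.arg (e k / e (k-1))| ≤ θ := by
    rw [← hsum_eq]
    exact hthin
  obtain ⟨hS0, hlow, hup⟩ := core n hn θ h hθ hh e hpos hthin' hdec'
  have hS : (∑ k ∈ Finset.Icc 1 (n-2), e k) = (starRingEnd ℂ) (cpt (v (n-1)) - cpt (v 1)) := by
    simp only [he]
    rw [← map_sum]
    congr 1
    have ht := tele_sum (fun k => cpt (v k)) (n-2)
    rw [show n-2+1 = n-1 by omega] at ht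
    exact ht
  have hv1 : v (n-1) ≠ v 1 := by
    intro hEq
    apply hS0
    rw [hS, hEq, sub_self, map_zero]
  have hvn : v n ≠ v (n-1) := by
    have hd := (hne_pt (n-1) (by omega) le_rfl).2
    rw [show n-1+1 = n by omega] at hd
    exact hd
  have hbeta : beta (v 1) (v (n-1)) (v n)
      = |Complex.arg (e (n-1) / (∑ k ∈ Finset.Icc 1 (n-2), e k))| := by
    rw [beta_eq_abs_arg hv1 hvn, hS]
    have hen : e (n-1) = (starRingEnd ℂ) (cpt (v n) - cpt (v (n-1))) := by
      simp only [he]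
      rw [show n-1+1 = n by omega]
    rw [hen, ← map_div₀, abs_arg_conj]
  rw [hsum_eq, hbeta]
  exact ⟨hlow, hup⟩
end
end

section
/- Let θ < 0.5 and h > 4, and let (v_1, ..., v_n) be a proper θ-thin sequence in R^2 whose edge sequence is h-decreasing. Writing β_k = β(v_{k-1}, v_k, v_{k+1}) and γ_k = d(v_k, v_{k+1})·β_k, one has (sin θ / θ)^n · Σ_{k=2}^{n-1} γ_k ≤ β(v_1, v_2, v_n)·d(v_2, v_n) ≤ (h/(h−1))^n · Σ_{k=2}^{n-1} γ_k. -/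
open EuclideanGeometry Real Finset

noncomputable section

/-! ### Auxiliary material -/

/-- The planar cross product of two vectors. -/
def cr (u w : Pt) : ℝ := u 0 * w 1 - u 1 * w 0

lemma inner_coords (u w : Pt) : (inner ℝ u w : ℝ) = u 0 * w 0 + u 1 * w 1 := by
  simp [PiLp.inner_apply, Fin.sum_univ_two, RCLike.inner_apply, conj_trivial]; ring

lemma norm_sq_coords (u : Pt) : ‖u‖ ^ 2 = u 0 ^ 2 + u 1 ^ 2 := by
  rw [← real_inner_self_eq_norm_sq, inner_coords]; ring

lemma coords_ne_zero {u : Pt} (hu : u ≠ 0) : 0 < u 0 ^ 2 + u 1 ^ 2 := by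
  rw [← norm_sq_coords]
  have : ‖u‖ ≠ 0 := by simpa using hu
  positivity

lemma lin_eval (ℓ : Pt →ₗ[ℝ] ℝ) (x : Pt) :
    ℓ x = x 0 * ℓ (EuclideanSpace.single 0 1) + x 1 * ℓ (EuclideanSpace.single 1 1) := by
  have hx : x = x 0 • (EuclideanSpace.single 0 1 : Pt) + x 1 • EuclideanSpace.single 1 1 := by
    ext i
    fin_cases i <;> simp [EuclideanSpace.single_apply]
  conv_lhs => rw [hx]
  simp [smul_eq_mul]

lemma sign_transfer {e y z : Pt} {a b : ℝ} (he : a * e 0 + b * e 1 = 0) (he0 : e ≠ 0)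
    (hy : a * y 0 + b * y 1 < 0) (hz : a * z 0 + b * z 1 < 0)
    (hcy : cr e y < 0) : cr e z < 0 := by
  have hN : 0 < e 0 ^ 2 + e 1 ^ 2 := coords_ne_zero he0
  set t := e 0 * b - e 1 * a with ht
  have idy : (a * y 0 + b * y 1) * (e 0 ^ 2 + e 1 ^ 2) =
      t * cr e y + (y 0 * e 0 + y 1 * e 1) * (a * e 0 + b * e 1) := by
    simp only [cr, ht]; ring
  have idz : (a * z 0 + b * z 1) * (e 0 ^ 2 + e 1 ^ 2) =
      t * cr e z + (z 0 * e 0 + z 1 * e 1) * (a * e 0 + b * e 1) := by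
    simp only [cr, ht]; ring
  rw [he, mul_zero, add_zero] at idy idz
  have h1 : t * cr e y < 0 := by rw [← idy]; exact mul_neg_of_neg_of_pos hy hN
  have h2 : t * cr e z < 0 := by rw [← idz]; exact mul_neg_of_neg_of_pos hz hN
  nlinarith

lemma sin_bound {x y : ℝ} (hx : 0 ≤ x) (hxy : x ≤ y) (hy : y ≤ π) : x * sin y ≤ y * sin x := by
  rcases eq_or_lt_of_le (hx.trans hxy) with hy0 | hy0
  · have : x = 0 := le_antisymm (hxy.trans hy0.symm.le) hx
    simp [this, ← hy0]
  · have h1 := strictConcaveOn_sin_Icc.concaveOn.2 (show (0:ℝ) ∈ Set.Icc 0 π by simp [Real.pi_nonneg])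
      (show y ∈ Set.Icc 0 π from ⟨hy0.le, hy⟩)
      (show (0:ℝ) ≤ 1 - x/y by rw [sub_nonneg]; exact div_le_one_of_le₀ hxy hy0.le)
      (show (0:ℝ) ≤ x/y by positivity) (by ring)
    simp only [smul_eq_mul, mul_zero, Real.sin_zero, zero_add] at h1
    rw [div_mul_cancel₀ _ hy0.ne'] at h1
    calc x * sin y = y * (x/y * sin y) := by field_simp
      _ ≤ y * sin x := by exact mul_le_mul_of_nonneg_left h1 hy0.le

lemma exists_polar (u : Pt) (hu : u ≠ 0) : ∃ φ, u 0 = ‖u‖ * cos φ ∧ u 1 = ‖u‖ * sin φ := by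
  have hn : 0 < ‖u‖ := norm_pos_iff.2 hu
  have hsq : ‖u‖ ^ 2 = u 0 ^ 2 + u 1 ^ 2 := norm_sq_coords u
  have habs : |u 0| ≤ ‖u‖ := by
    rw [← Real.sqrt_sq (abs_nonneg (u 0)), ← Real.sqrt_sq hn.le]
    apply Real.sqrt_le_sqrt; rw [sq_abs, hsq]; nlinarith [sq_nonneg (u 1)]
  have hle : -1 ≤ u 0 / ‖u‖ ∧ u 0 / ‖u‖ ≤ 1 := by
    rw [← abs_le, abs_div, abs_of_pos hn, div_le_one hn]
    exact habs
  have hsin : Real.sin (Real.arccos (u 0 / ‖u‖)) = |u 1| / ‖u‖ := by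
    rw [Real.sin_arccos]
    rw [show (1 : ℝ) - (u 0 / ‖u‖)^2 = (|u 1| / ‖u‖)^2 by
      rw [div_pow, div_pow, sq_abs]; field_simp; nlinarith]
    exact Real.sqrt_sq (by positivity)
  rcases le_or_gt 0 (u 1) with h1 | h1
  · refine ⟨Real.arccos (u 0 / ‖u‖), ?_, ?_⟩
    · rw [Real.cos_arccos hle.1 hle.2]; field_simp
    · rw [hsin, abs_of_nonneg h1]; field_simp
  · refine ⟨-Real.arccos (u 0 / ‖u‖), ?_, ?_⟩
    · rw [Real.cos_neg, Real.cos_arccos hle.1 hle.2]; field_simp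
    · rw [Real.sin_neg, hsin, abs_of_neg h1]; field_simp

lemma rot (u w : Pt) (φ : ℝ) (hu : u ≠ 0) (hw : w ≠ 0)
    (h0 : u 0 = ‖u‖ * cos φ) (h1 : u 1 = ‖u‖ * sin φ) (hc : cr u w ≤ 0) :
    w 0 = ‖w‖ * cos (φ - InnerProductGeometry.angle u w) ∧
    w 1 = ‖w‖ * sin (φ - InnerProductGeometry.angle u w) := by
  set β := InnerProductGeometry.angle u w with hβ
  have hnu : 0 < ‖u‖ := norm_pos_iff.2 hu
  have hnw : 0 < ‖w‖ := norm_pos_iff.2 hw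
  have hcos : Real.cos β * (‖u‖ * ‖w‖) = u 0 * w 0 + u 1 * w 1 := by
    rw [hβ, InnerProductGeometry.cos_angle, div_mul_cancel₀, inner_coords]
    positivity
  have hsin : Real.sin β * (‖u‖ * ‖w‖) = -(u 0 * w 1 - u 1 * w 0) := by
    rw [hβ, InnerProductGeometry.sin_angle_mul_norm_mul_norm]
    rw [inner_coords, inner_coords, inner_coords]
    rw [show (u 0 * u 0 + u 1 * u 1) * (w 0 * w 0 + w 1 * w 1) -
        (u 0 * w 0 + u 1 * w 1) * (u 0 * w 0 + u 1 * w 1) = (u 0 * w 1 - u 1 * w 0)^2 by ring]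
    rw [Real.sqrt_sq_eq_abs, abs_of_nonpos (by simpa [cr] using hc)]
  have key0 : w 0 * (‖u‖ * ‖u‖) = (‖w‖ * cos (φ - β)) * (‖u‖ * ‖u‖) := by
    rw [Real.cos_sub]
    have expand : ‖w‖ * (Real.cos φ * Real.cos β + Real.sin φ * Real.sin β) * (‖u‖ * ‖u‖)
        = ‖u‖ * (Real.cos φ * (Real.cos β * (‖u‖ * ‖w‖)) + Real.sin φ * (Real.sin β * (‖u‖ * ‖w‖))) := by
      ring
    rw [expand, hcos, hsin, h0, h1]
    linear_combination (-(w 0)*‖u‖*‖u‖) * Real.sin_sq_add_cos_sq φ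
  have key1 : w 1 * (‖u‖ * ‖u‖) = (‖w‖ * sin (φ - β)) * (‖u‖ * ‖u‖) := by
    rw [Real.sin_sub]
    have expand : ‖w‖ * (Real.sin φ * Real.cos β - Real.cos φ * Real.sin β) * (‖u‖ * ‖u‖)
        = ‖u‖ * (Real.sin φ * (Real.cos β * (‖u‖ * ‖w‖)) - Real.cos φ * (Real.sin β * (‖u‖ * ‖w‖))) := by
      ring
    rw [expand, hcos, hsin, h0, h1]
    linear_combination (-(w 1)*‖u‖*‖u‖) * Real.sin_sq_add_cos_sq φ
  have hne : (‖u‖ * ‖u‖) ≠ 0 := by positivity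
  exact ⟨mul_right_cancel₀ hne key0, mul_right_cancel₀ hne key1⟩

lemma telescope (v : ℕ → Pt) : ∀ m, 2 ≤ m →
    ∑ k ∈ Icc 2 m, (v (k+1) - v k) = v (m+1) - v 2 := by
  intro m hm
  induction m, hm using Nat.le_induction with
  | base => simp
  | succ m hm ih =>
      rw [Finset.sum_Icc_succ_top (by omega), ih]
      abel

lemma s_mono {a b : ℝ} (ha : 0 ≤ a) (hab : a ≤ b) (hb : b ≤ π/2) :
    a * sin a + cos a ≤ b * sin b + cos b := by
  have hmono := Real.strictMonoOn_sin.monotoneOn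
  have hsab : sin ((a+b)/2) ≤ sin b := by
    apply hmono (Set.mem_Icc.2 ⟨by linarith, by linarith⟩) (Set.mem_Icc.2 ⟨by linarith, hb⟩)
    linarith
  have hsab0 : 0 ≤ sin ((a+b)/2) := Real.sin_nonneg_of_nonneg_of_le_pi (by linarith)
    (by nlinarith [Real.pi_gt_three])
  have hsb0 : 0 ≤ sin b := Real.sin_nonneg_of_nonneg_of_le_pi (by linarith)
    (by nlinarith [Real.pi_gt_three])
  have hsin_small : sin ((b-a)/2) ≤ (b-a)/2 := Real.sin_le (by linarith)
  have hsin_small0 : 0 ≤ sin ((b-a)/2) := Real.sin_nonneg_of_nonneg_of_le_pi (by linarith)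
    (by nlinarith [Real.pi_gt_three])
  have h1 : cos a - cos b ≤ (b - a) * sin b := by
    rw [Real.cos_sub_cos]
    have : -2 * sin ((a+b)/2) * sin ((a-b)/2) = 2 * sin ((a+b)/2) * sin ((b-a)/2) := by
      rw [show (a-b)/2 = -((b-a)/2) by ring, Real.sin_neg]; ring
    rw [this]
    calc 2 * sin ((a+b)/2) * sin ((b-a)/2) ≤ 2 * sin b * ((b-a)/2) := by
          apply mul_le_mul _ hsin_small hsin_small0 (by linarith)
          · nlinarith
      _ = (b - a) * sin b := by ring
  have hsa : sin a ≤ sin b := by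
    apply hmono (Set.mem_Icc.2 ⟨by linarith, by linarith⟩) (Set.mem_Icc.2 ⟨by linarith, hb⟩) hab
  nlinarith

/-- The auxiliary function `g(t) = √(1+t²)·arctan t`. -/
def gfun (t : ℝ) : ℝ := Real.sqrt (1 + t^2) * Real.arctan t

lemma gfun_hasDeriv (t : ℝ) :
    HasDerivAt gfun (Real.arctan t * Real.sin (Real.arctan t) + Real.cos (Real.arctan t)) t := by
  have hpos : (0:ℝ) < 1 + t^2 := by positivity
  have h1 : HasDerivAt (fun t : ℝ => 1 + t^2) (2*t) t := by
    simpa using ((hasDerivAt_pow 2 t).const_add 1)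
  have h2 : HasDerivAt (fun t : ℝ => Real.sqrt (1 + t^2)) (1 / (2 * Real.sqrt (1+t^2)) * (2*t)) t :=
    (Real.hasDerivAt_sqrt hpos.ne').comp t h1
  have h3 := h2.mul (Real.hasDerivAt_arctan t)
  refine h3.congr_deriv (Eq.symm ?_)
  rw [Real.sin_arctan, Real.cos_arctan]
  have hs : Real.sqrt (1+t^2) > 0 := Real.sqrt_pos.2 hpos
  have hsq : Real.sqrt (1+t^2) ^ 2 = 1 + t^2 := Real.sq_sqrt hpos.le
  field_simp
  ring_nf
  nlinarith [hsq]

lemma gfun_convex : ConvexOn ℝ (Set.Ici (0:ℝ)) gfun := by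
  apply MonotoneOn.convexOn_of_deriv (convex_Ici 0)
  · apply Continuous.continuousOn
    exact (Real.continuous_sqrt.comp (by continuity)).mul Real.continuous_arctan
  · intro x _
    exact (gfun_hasDeriv x).differentiableAt.differentiableWithinAt
  · intro x hx y hy hxy
    rw [interior_Ici] at hx hy
    rw [(gfun_hasDeriv x).deriv, (gfun_hasDeriv y).deriv]
    have h1 : (0:ℝ) ≤ arctan x := by
      rw [← Real.arctan_zero]
      exact Real.arctan_strictMono.monotone (le_of_lt hx)
    have h2 : arctan x ≤ arctan y := Real.arctan_strictMono.monotone hxy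
    exact s_mono h1 h2 (Real.arctan_lt_pi_div_two y).le

lemma F_eq {p : ℝ} (q : ℝ) (hp : 0 < p) :
    Real.sqrt (p^2 + q^2) * Real.arctan (q/p) = p * gfun (q/p) := by
  unfold gfun
  rw [← mul_assoc]
  congr 1
  rw [show 1 + (q/p)^2 = (p^2+q^2)/p^2 by field_simp]
  rw [Real.sqrt_div (by positivity), Real.sqrt_sq hp.le]
  field_simp

lemma F_subadd {p1 q1 p2 q2 : ℝ} (hp1 : 0 < p1) (hp2 : 0 < p2) (hq1 : 0 ≤ q1) (hq2 : 0 ≤ q2) :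
    Real.sqrt ((p1+p2)^2 + (q1+q2)^2) * Real.arctan ((q1+q2)/(p1+p2)) ≤
      Real.sqrt (p1^2 + q1^2) * Real.arctan (q1/p1) +
      Real.sqrt (p2^2 + q2^2) * Real.arctan (q2/p2) := by
  have hp12 : 0 < p1 + p2 := by linarith
  rw [F_eq _ hp1, F_eq _ hp2, F_eq _ hp12]
  have hj := gfun_convex.2 (Set.mem_Ici.2 (by positivity : (0:ℝ) ≤ q1/p1))
    (Set.mem_Ici.2 (by positivity : (0:ℝ) ≤ q2/p2))
    (by positivity : (0:ℝ) ≤ p1/(p1+p2)) (by positivity : (0:ℝ) ≤ p2/(p1+p2))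
    (by field_simp)
  rw [smul_eq_mul, smul_eq_mul, smul_eq_mul, smul_eq_mul] at hj
  have harg : p1/(p1+p2) * (q1/p1) + p2/(p1+p2) * (q2/p2) = (q1+q2)/(p1+p2) := by
    field_simp
  rw [harg] at hj
  calc (p1+p2) * gfun ((q1+q2)/(p1+p2))
      ≤ (p1+p2) * (p1/(p1+p2) * gfun (q1/p1) + p2/(p1+p2) * gfun (q2/p2)) :=
        mul_le_mul_of_nonneg_left hj hp12.le
    _ = p1 * gfun (q1/p1) + p2 * gfun (q2/p2) := by field_simp

lemma F_sum {ι : Type*} (s : Finset ι) (hs : s.Nonempty) (p q : ι → ℝ)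
    (hp : ∀ i ∈ s, 0 < p i) (hq : ∀ i ∈ s, 0 ≤ q i) :
    Real.sqrt ((∑ i ∈ s, p i)^2 + (∑ i ∈ s, q i)^2) *
      Real.arctan ((∑ i ∈ s, q i)/(∑ i ∈ s, p i)) ≤
    ∑ i ∈ s, Real.sqrt (p i^2 + q i^2) * Real.arctan (q i / p i) := by
  induction hs using Finset.Nonempty.cons_induction with
  | singleton a => simp
  | cons a s ha hs ih =>
      rw [Finset.sum_cons, Finset.sum_cons, Finset.sum_cons]
      have hps : 0 < ∑ i ∈ s, p i :=
        Finset.sum_pos (fun i hi => hp i (Finset.mem_cons_of_mem hi)) hs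
      have hqs : 0 ≤ ∑ i ∈ s, q i :=
        Finset.sum_nonneg (fun i hi => hq i (Finset.mem_cons_of_mem hi))
      calc Real.sqrt ((p a + ∑ i ∈ s, p i)^2 + (q a + ∑ i ∈ s, q i)^2) *
            Real.arctan ((q a + ∑ i ∈ s, q i)/(p a + ∑ i ∈ s, p i))
          ≤ Real.sqrt (p a^2 + q a^2) * Real.arctan (q a / p a) +
            Real.sqrt ((∑ i ∈ s, p i)^2 + (∑ i ∈ s, q i)^2) *
              Real.arctan ((∑ i ∈ s, q i)/(∑ i ∈ s, p i)) :=
            F_subadd (hp a (Finset.mem_cons_self a s)) hps (hq a (Finset.mem_cons_self a s)) hqs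
        _ ≤ _ := by
            apply add_le_add le_rfl
            exact ih (fun i hi => hp i (Finset.mem_cons_of_mem hi))
              (fun i hi => hq i (Finset.mem_cons_of_mem hi))

lemma chain_ne (n : ℕ) (hn : 3 ≤ n) (v : ℕ → Pt) (hv : Proper n v) :
    ∀ j, 1 ≤ j → j + 1 ≤ n → v j ≠ v (j+1) := by
  intro j hj1 hjn heq
  by_cases hc : j + 1 ≤ n - 1
  · obtain ⟨ℓ, c, hℓ1, hℓ2, hℓ3⟩ := hv.2 (j+1) (by omega) (by omega)
    have := hℓ3 j hj1 (by omega) (by omega)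
      (by unfold cyc; rw [if_neg (by omega)]; omega)
    rw [heq, hℓ1] at this
    exact lt_irrefl c this
  · have hj1n : j + 1 = n := by omega
    obtain ⟨ℓ, c, hℓ1, hℓ2, hℓ3⟩ := hv.2 n (by omega) le_rfl
    have := hℓ3 j hj1 (by omega) (by omega)
      (by unfold cyc; rw [if_pos rfl]; omega)
    rw [heq, hj1n, hℓ1] at this
    exact lt_irrefl c this

lemma chain_cr (n : ℕ) (hn : 3 ≤ n) (v : ℕ → Pt) (hv : Proper n v) :
    ∀ j, 1 ≤ j → j + 2 ≤ n → cr (v (j+1) - v j) (v (j+2) - v (j+1)) < 0 := by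
  have hne := chain_ne n hn v hv
  intro j hj1
  induction j, hj1 using Nat.le_induction with
  | base =>
      intro _
      have h1 := hv.1
      have : cr (v 2 - v 1) (v 3 - v 2) = -tdet (v 1) (v 2) (v 3) := by
        simp only [cr, tdet, PiLp.sub_apply]
        ring
      rw [this]
      linarith
  | succ j hj ih =>
      intro hjn
      have hprev := ih (by omega)
      obtain ⟨ℓ, c, hℓ1, hℓ2, hℓ3⟩ := hv.2 (j+1) (by omega) (by omega)
      have hcyc : cyc n (j+1) = j+2 := by unfold cyc; rw [if_neg (by omega)]
      rw [hcyc] at hℓ2 hℓ3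
      set a := ℓ (EuclideanSpace.single 0 1) with ha
      set b := ℓ (EuclideanSpace.single 1 1) with hb
      have heval : ∀ x : Pt, ℓ x = x 0 * a + x 1 * b := fun x => lin_eval ℓ x
      have hE0 : (v (j+2) - v (j+1) : Pt) ≠ 0 := by
        intro h
        exact hne (j+1) (by omega) (by omega) (by rwa [sub_eq_zero, eq_comm] at h)
      have he : a * (v (j+2) - v (j+1) : Pt) 0 + b * (v (j+2) - v (j+1) : Pt) 1 = 0 := by
        have h0 : ℓ (v (j+2) - v (j+1)) = 0 := by rw [map_sub, hℓ1, hℓ2]; ring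
        rw [heval] at h0
        linarith
      have hy : a * (v j - v (j+1) : Pt) 0 + b * (v j - v (j+1) : Pt) 1 < 0 := by
        have h0 : ℓ (v j - v (j+1)) < 0 := by
          rw [map_sub, hℓ1]
          have := hℓ3 j (by omega) (by omega) (by omega) (by omega)
          linarith
        rw [heval] at h0
        linarith
      have hz : a * (v (j+3) - v (j+1) : Pt) 0 + b * (v (j+3) - v (j+1) : Pt) 1 < 0 := by
        have h0 : ℓ (v (j+3) - v (j+1)) < 0 := by
          rw [map_sub, hℓ1]
          have := hℓ3 (j+3) (by omega) (by omega) (by omega) (by omega)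
          linarith
        rw [heval] at h0
        linarith
      have hcy : cr (v (j+2) - v (j+1)) (v j - v (j+1)) < 0 := by
        have : cr (v (j+2) - v (j+1)) (v j - v (j+1)) =
            cr (v (j+1) - v j) (v (j+2) - v (j+1)) := by
          simp only [cr, PiLp.sub_apply]; ring
        rw [this]; exact hprev
      have hcz := sign_transfer he hE0 hy hz hcy
      have : cr (v (j+2) - v (j+1)) (v (j+3) - v (j+1)) =
          cr (v (j+2) - v (j+1)) (v (j+3) - v (j+2)) := by
        simp only [cr, PiLp.sub_apply]; ring
      rw [this] at hcz
      exact hcz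

lemma geom_tail (n : ℕ) (hn : 3 ≤ n) (h : ℝ) (hh : 4 < h) (v : ℕ → Pt)
    (hedge : EdgeDecr n v h) :
    ∀ d j, 2 ≤ j → j ≤ n-1 → n-1-j ≤ d →
      ∑ k ∈ Icc j (n-1), dist (v k) (v (k+1)) ≤ dist (v j) (v (j+1)) * (h/(h-1)) := by
  have hh1 : (0:ℝ) < h - 1 := by linarith
  have hquot : (1:ℝ) ≤ h / (h-1) := by rw [le_div_iff₀ hh1]; linarith
  intro d
  induction d with
  | zero =>
      intro j h2 h3 h4
      have hj : j = n-1 := by omega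
      subst hj
      rw [Finset.Icc_self, Finset.sum_singleton]
      nlinarith [dist_nonneg (x := v (n-1)) (y := v (n-1+1))]
  | succ d ih =>
      intro j h2 h3 h4
      by_cases hj : j = n-1
      · subst hj
        rw [Finset.Icc_self, Finset.sum_singleton]
        nlinarith [dist_nonneg (x := v (n-1)) (y := v (n-1+1))]
      · have hsplit : Icc j (n-1) = insert j (Icc (j+1) (n-1)) := by
          ext x
          simp only [Finset.mem_Icc, Finset.mem_insert]
          omega
        rw [hsplit, Finset.sum_insert (by simp only [Finset.mem_Icc]; omega)]
        have hrec := ih (j+1) (by omega) (by omega) (by omega)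
        have hstep := hedge j (by omega) (by omega)
        rw [← mul_div_assoc, le_div_iff₀ hh1] at hrec ⊢
        nlinarith [dist_nonneg (x := v (j+1)) (y := v (j+2))]

/-- Bounds for `β(v₁, v₂, v_n)·d(v₂, v_n)` in terms of the edge-by-angle sums
`γ_k = d(v_k, v_{k+1})·β_k` of a proper `θ`-thin sequence (`θ < 0.5`) whose
edge sequence is `h`-decreasing (`h > 4`). -/
theorem stmt12 (n : ℕ) (hn : 3 ≤ n) (θ h : ℝ) (hθ : θ < 0.5) (hh : 4 < h)
    (v : ℕ → Pt) (hv : Proper n v) (hthin : Thin n v θ) (hedge : EdgeDecr n v h) :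
    (Real.sin θ / θ) ^ n *
        ∑ k ∈ Finset.Icc 2 (n - 1),
          dist (v k) (v (k + 1)) * beta (v (k - 1)) (v k) (v (k + 1)) ≤
      beta (v 1) (v 2) (v n) * dist (v 2) (v n) ∧
    beta (v 1) (v 2) (v n) * dist (v 2) (v n) ≤
      (h / (h - 1)) ^ n *
        ∑ k ∈ Finset.Icc 2 (n - 1),
          dist (v k) (v (k + 1)) * beta (v (k - 1)) (v k) (v (k + 1)) := by
  have hπ := Real.pi_gt_three
  have hne := chain_ne n hn v hv
  have hcr := chain_cr n hn v hv
  have hE0 : ∀ j, 1 ≤ j → j + 1 ≤ n → (v (j+1) - v j : Pt) ≠ 0 := by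
    intro j h1 h2 hx
    exact hne j h1 h2 (by rwa [sub_eq_zero, eq_comm] at hx)
  have hbeta_nn : ∀ a b c : Pt, 0 ≤ beta a b c := fun a b c =>
    sub_nonneg.2 (EuclideanGeometry.angle_le_pi a b c)
  have hbeta_ang1 : ∀ k : ℕ, beta (v k) (v (k+1)) (v (k+2)) =
      InnerProductGeometry.angle (v (k+1) - v k) (v (k+2) - v (k+1)) := by
    intro k
    unfold beta EuclideanGeometry.angle
    rw [show (v k -ᵥ v (k+1) : Pt) = -(v (k+1) - v k) by rw [vsub_eq_sub]; abel,
        show (v (k+2) -ᵥ v (k+1) : Pt) = v (k+2) - v (k+1) from vsub_eq_sub _ _,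
        InnerProductGeometry.angle_neg_left]
    ring
  -- the cumulative turning angle
  set A : ℕ → ℝ := fun m => ∑ j ∈ Icc 2 m, beta (v (j-1)) (v j) (v (j+1)) with hAdef
  have hA1 : A 1 = 0 := by
    simp only [hAdef]
    rw [show Icc 2 1 = (∅ : Finset ℕ) from Finset.Icc_eq_empty (by omega), Finset.sum_empty]
  have hA_succ : ∀ k, 1 ≤ k → A (k+1) = A k + beta (v k) (v (k+1)) (v (k+2)) := by
    intro k hk
    simp only [hAdef]
    rw [Finset.sum_Icc_succ_top (show 2 ≤ k+1 by omega)]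
    simp only [Nat.add_sub_cancel]
  have hA_nonneg : ∀ m, 0 ≤ A m := by
    intro m
    simp only [hAdef]
    exact Finset.sum_nonneg fun i _ => hbeta_nn _ _ _
  have hTθ : A (n-1) ≤ θ := by
    simp only [hAdef]
    exact hthin
  have hA_le_θ : ∀ m, m ≤ n-1 → A m ≤ θ := by
    intro m hm
    refine le_trans ?_ hTθ
    simp only [hAdef]
    exact Finset.sum_le_sum_of_subset_of_nonneg (Finset.Icc_subset_Icc_right hm)
      fun i _ _ => hbeta_nn _ _ _
  have hb_le_A : ∀ k, 2 ≤ k → beta (v (k-1)) (v k) (v (k+1)) ≤ A k := by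
    intro k hk
    simp only [hAdef]
    exact Finset.single_le_sum (f := fun j => beta (v (j-1)) (v j) (v (j+1)))
      (fun i _ => hbeta_nn _ _ _) (Finset.mem_Icc.2 ⟨hk, le_rfl⟩)
  -- polar coordinates for the first edge
  obtain ⟨φ, hφ0, hφ1⟩ := exists_polar (v (1+1) - v 1) (hE0 1 (by omega) (by omega))
  rw [show (1:ℕ)+1 = 2 from rfl] at hφ0 hφ1
  -- induction: every edge direction
  have hdir : ∀ k, 1 ≤ k → k ≤ n - 1 →
      (v (k+1) - v k : Pt) 0 = ‖(v (k+1) - v k : Pt)‖ * Real.cos (φ - A k) ∧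
      (v (k+1) - v k : Pt) 1 = ‖(v (k+1) - v k : Pt)‖ * Real.sin (φ - A k) := by
    intro k hk1
    induction k, hk1 using Nat.le_induction with
    | base =>
        intro _
        rw [hA1, sub_zero]
        exact ⟨hφ0, hφ1⟩
    | succ k hk ih =>
        intro hkn
        have hd := ih (by omega)
        have hu := hE0 k (by omega) (by omega)
        have hw := hE0 (k+1) (by omega) (by omega)
        have hcrk : cr (v (k+1) - v k) (v (k+2) - v (k+1)) ≤ 0 := (hcr k (by omega) (by omega)).le
        have hrotc := rot (v (k+1) - v k) (v (k+2) - v (k+1)) (φ - A k) hu hw hd.1 hd.2 hcrk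
        rw [hA_succ k (by omega), hbeta_ang1 k]
        rw [show φ - (A k + InnerProductGeometry.angle (v (k+1) - v k) (v (k+2) - v (k+1)))
            = (φ - A k) - InnerProductGeometry.angle (v (k+1) - v k) (v (k+2) - v (k+1)) by ring]
        exact hrotc
  -- the chord and its coordinates
  set C : ℝ := ∑ k ∈ Icc 2 (n-1), dist (v k) (v (k+1)) * Real.cos (A k) with hC
  set S : ℝ := ∑ k ∈ Icc 2 (n-1), dist (v k) (v (k+1)) * Real.sin (A k) with hS
  have hr_norm : ∀ k : ℕ, dist (v k) (v (k+1)) = ‖(v (k+1) - v k : Pt)‖ := by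
    intro k; rw [dist_eq_norm, norm_sub_rev]
  have hWsum : (v n - v 2 : Pt) = ∑ k ∈ Icc 2 (n-1), (v (k+1) - v k) := by
    rw [telescope v (n-1) (by omega), show n-1+1 = n by omega]
  have hw0 : (v n - v 2 : Pt) 0 = Real.cos φ * C + Real.sin φ * S := by
    rw [hWsum, WithLp.ofLp_sum, Finset.sum_apply, hC, hS, Finset.mul_sum, Finset.mul_sum,
      ← Finset.sum_add_distrib]
    apply Finset.sum_congr rfl
    intro k hk
    rw [Finset.mem_Icc] at hk
    have hd := hdir k (by omega) (by omega)
    rw [hd.1, Real.cos_sub, hr_norm k]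
    ring
  have hw1 : (v n - v 2 : Pt) 1 = Real.sin φ * C - Real.cos φ * S := by
    rw [hWsum, WithLp.ofLp_sum, Finset.sum_apply, hC, hS, Finset.mul_sum, Finset.mul_sum,
      ← Finset.sum_sub_distrib]
    apply Finset.sum_congr rfl
    intro k hk
    rw [Finset.mem_Icc] at hk
    have hd := hdir k (by omega) (by omega)
    rw [hd.2, Real.sin_sub, hr_norm k]
    ring
  have hcosA : ∀ k, k ≤ n-1 → 0 < Real.cos (A k) := by
    intro k hk
    apply Real.cos_pos_of_mem_Ioo
    constructor
    · have := hA_nonneg k; linarith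
    · have := hA_le_θ k hk; linarith
  have hsinA : ∀ k, k ≤ n-1 → 0 ≤ Real.sin (A k) := by
    intro k hk
    apply Real.sin_nonneg_of_nonneg_of_le_pi (hA_nonneg k)
    have := hA_le_θ k hk; linarith
  have hCpos : 0 < C := by
    rw [hC]
    apply Finset.sum_pos _ (Finset.nonempty_Icc.2 (by omega))
    intro k hk
    rw [Finset.mem_Icc] at hk
    exact mul_pos (dist_pos.2 (hne k (by omega) (by omega))) (hcosA k (by omega))
  have hSnn : 0 ≤ S := by
    rw [hS]
    apply Finset.sum_nonneg
    intro k hk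
    rw [Finset.mem_Icc] at hk
    exact mul_nonneg dist_nonneg (hsinA k (by omega))
  have hNW : ‖(v n - v 2 : Pt)‖^2 = C^2 + S^2 := by
    rw [norm_sq_coords, hw0, hw1]
    linear_combination (C^2 + S^2) * Real.sin_sq_add_cos_sq φ
  have hWpos : 0 < ‖(v n - v 2 : Pt)‖ := by
    have h2 : 0 < ‖(v n - v 2 : Pt)‖^2 := by nlinarith [hCpos, sq_nonneg S]
    nlinarith [norm_nonneg (v n - v 2 : Pt), h2]
  have hu1 : (v 2 - v 1 : Pt) ≠ 0 := by
    have := hE0 1 (by omega) (by omega)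
    rwa [show (1:ℕ)+1 = 2 from rfl] at this
  have hnu1 : 0 < ‖(v 2 - v 1 : Pt)‖ := norm_pos_iff.2 hu1
  have hinner : (inner ℝ (v 2 - v 1 : Pt) (v n - v 2 : Pt) : ℝ) = ‖(v 2 - v 1 : Pt)‖ * C := by
    rw [inner_coords, hw0, hw1, hφ0, hφ1]
    linear_combination (‖(v 2 - v 1 : Pt)‖ * C) * Real.sin_sq_add_cos_sq φ
  set βs := InnerProductGeometry.angle (v 2 - v 1 : Pt) (v n - v 2 : Pt) with hβs
  have hbs : beta (v 1) (v 2) (v n) = βs := by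
    rw [hβs]
    unfold beta EuclideanGeometry.angle
    rw [show (v 1 -ᵥ v 2 : Pt) = -(v 2 - v 1) by rw [vsub_eq_sub]; abel,
        show (v n -ᵥ v 2 : Pt) = v n - v 2 from vsub_eq_sub _ _,
        InnerProductGeometry.angle_neg_left]
    ring
  have hbsnn : 0 ≤ βs := InnerProductGeometry.angle_nonneg _ _
  have hbspi : βs ≤ π := InnerProductGeometry.angle_le_pi _ _
  have hcosb : Real.cos βs * ‖(v n - v 2 : Pt)‖ = C := by
    rw [hβs, InnerProductGeometry.cos_angle, hinner]
    field_simp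
  have hsinb : Real.sin βs * ‖(v n - v 2 : Pt)‖ = S := by
    have h1 := InnerProductGeometry.sin_angle_mul_norm_mul_norm (v 2 - v 1 : Pt) (v n - v 2 : Pt)
    rw [real_inner_self_eq_norm_sq, real_inner_self_eq_norm_sq, hinner, hNW] at h1
    rw [show ‖(v 2 - v 1 : Pt)‖^2 * (C^2+S^2) -
        (‖(v 2 - v 1 : Pt)‖*C) * (‖(v 2 - v 1 : Pt)‖*C) = (‖(v 2 - v 1 : Pt)‖*S)^2 by ring] at h1
    rw [Real.sqrt_sq (mul_nonneg (norm_nonneg _) hSnn)] at h1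
    have h2 : ‖(v 2 - v 1 : Pt)‖ * (Real.sin βs * ‖(v n - v 2 : Pt)‖)
        = ‖(v 2 - v 1 : Pt)‖ * S := by rw [hβs]; linear_combination h1
    exact mul_left_cancel₀ hnu1.ne' h2
  have hdist2n : dist (v 2) (v n) = ‖(v n - v 2 : Pt)‖ := by
    rw [dist_eq_norm, norm_sub_rev]
  set G := ∑ k ∈ Finset.Icc 2 (n-1),
      dist (v k) (v (k+1)) * beta (v (k-1)) (v k) (v (k+1)) with hG
  have hGnn : 0 ≤ G := by
    rw [hG]
    exact Finset.sum_nonneg fun k _ => mul_nonneg dist_nonneg (hbeta_nn _ _ _)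
  constructor
  · -- lower bound
    rw [hbs, hdist2n]
    by_cases hθ0 : θ ≤ 0
    · have hT0 : A (n-1) = 0 := le_antisymm ((hA_le_θ (n-1) le_rfl).trans hθ0) (hA_nonneg _)
      have hall : ∀ k ∈ Icc 2 (n-1), beta (v (k-1)) (v k) (v (k+1)) = 0 := by
        have h2 : A (n-1) = ∑ j ∈ Icc 2 (n-1), beta (v (j-1)) (v j) (v (j+1)) := by
          simp only [hAdef]
        rw [h2] at hT0
        exact (Finset.sum_eq_zero_iff_of_nonneg fun i _ => hbeta_nn _ _ _).1 hT0
      have hG0 : G = 0 := by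
        rw [hG]
        exact Finset.sum_eq_zero fun k hk => by rw [hall k hk, mul_zero]
      rw [hG0, mul_zero]
      exact mul_nonneg hbsnn (norm_nonneg _)
    · push_neg at hθ0
      have hθπ : θ ≤ π := by linarith
      have hsθ_nn : 0 ≤ Real.sin θ / θ :=
        div_nonneg (Real.sin_nonneg_of_nonneg_of_le_pi hθ0.le hθπ) hθ0.le
      have hsθ_le1 : Real.sin θ / θ ≤ 1 := div_le_one_of_le₀ (Real.sin_le hθ0.le) hθ0.le
      calc (Real.sin θ / θ) ^ n * G ≤ (Real.sin θ / θ) * G :=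
            mul_le_mul_of_nonneg_right (pow_le_of_le_one hsθ_nn hsθ_le1 (by omega)) hGnn
        _ ≤ S := by
            rw [hS, hG, Finset.mul_sum]
            apply Finset.sum_le_sum
            intro k hk
            rw [Finset.mem_Icc] at hk
            have hb0 : 0 ≤ beta (v (k-1)) (v k) (v (k+1)) := hbeta_nn _ _ _
            have hbθ : beta (v (k-1)) (v k) (v (k+1)) ≤ θ :=
              (hb_le_A k (by omega)).trans (hA_le_θ k (by omega))
            have hs1 : Real.sin θ / θ * beta (v (k-1)) (v k) (v (k+1)) ≤
                Real.sin (beta (v (k-1)) (v k) (v (k+1))) := by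
              rw [div_mul_eq_mul_div, div_le_iff₀ hθ0]
              have := sin_bound hb0 hbθ hθπ
              linarith
            have hs2 : Real.sin (beta (v (k-1)) (v k) (v (k+1))) ≤ Real.sin (A k) := by
              apply Real.strictMonoOn_sin.monotoneOn (Set.mem_Icc.2 ⟨by linarith, ?_⟩)
                (Set.mem_Icc.2 ⟨?_, ?_⟩) (hb_le_A k (by omega))
              · have := hA_le_θ k (by omega); have := hb_le_A k (by omega); linarith
              · have := hA_nonneg k; linarith
              · have := hA_le_θ k (by omega); linarith
            calc Real.sin θ / θ * (dist (v k) (v (k+1)) * beta (v (k-1)) (v k) (v (k+1)))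
                = dist (v k) (v (k+1)) * (Real.sin θ / θ * beta (v (k-1)) (v k) (v (k+1))) := by
                  ring
              _ ≤ dist (v k) (v (k+1)) * Real.sin (A k) :=
                  mul_le_mul_of_nonneg_left (hs1.trans hs2) dist_nonneg
        _ = Real.sin βs * ‖(v n - v 2 : Pt)‖ := hsinb.symm
        _ ≤ βs * ‖(v n - v 2 : Pt)‖ :=
            mul_le_mul_of_nonneg_right (Real.sin_le hbsnn) (norm_nonneg _)
  · -- upper bound
    rw [hbs, hdist2n]
    have hbs_lt : βs < π/2 := by
      by_contra hcon
      push_neg at hcon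
      have h2 : Real.cos βs ≤ 0 :=
        Real.cos_nonpos_of_pi_div_two_le_of_le hcon (by linarith)
      have h3 : C ≤ 0 := by
        rw [← hcosb]
        exact mul_nonpos_iff.2 (Or.inr ⟨h2, norm_nonneg _⟩)
      exact absurd hCpos (not_lt.2 h3)
    have hsin_eq : Real.sin βs = S / ‖(v n - v 2 : Pt)‖ := by
      rw [eq_div_iff hWpos.ne']; exact hsinb
    have hcos_eq : Real.cos βs = C / ‖(v n - v 2 : Pt)‖ := by
      rw [eq_div_iff hWpos.ne']; exact hcosb
    have htan : Real.tan βs = S / C := by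
      rw [Real.tan_eq_sin_div_cos, hsin_eq, hcos_eq]
      field_simp
    have hβs_eq : βs = Real.arctan (S / C) := by
      rw [← htan, Real.arctan_tan (by linarith) hbs_lt]
    -- the key convexity bound
    have hkey : βs * ‖(v n - v 2 : Pt)‖ ≤ ∑ k ∈ Icc 2 (n-1), dist (v k) (v (k+1)) * A k := by
      have hFs := F_sum (Icc 2 (n-1)) (Finset.nonempty_Icc.2 (by omega))
        (fun k => dist (v k) (v (k+1)) * Real.cos (A k))
        (fun k => dist (v k) (v (k+1)) * Real.sin (A k))
        (fun k hk => by
          rw [Finset.mem_Icc] at hk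
          exact mul_pos (dist_pos.2 (hne k (by omega) (by omega))) (hcosA k (by omega)))
        (fun k hk => by
          rw [Finset.mem_Icc] at hk
          exact mul_nonneg dist_nonneg (hsinA k (by omega)))
      calc βs * ‖(v n - v 2 : Pt)‖
          = Real.sqrt (C^2 + S^2) * Real.arctan (S/C) := by
            rw [hβs_eq, ← hNW, Real.sqrt_sq (norm_nonneg _)]; ring
        _ ≤ ∑ k ∈ Icc 2 (n-1),
              Real.sqrt ((dist (v k) (v (k+1)) * Real.cos (A k))^2 +
                (dist (v k) (v (k+1)) * Real.sin (A k))^2) *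
              Real.arctan ((dist (v k) (v (k+1)) * Real.sin (A k)) /
                (dist (v k) (v (k+1)) * Real.cos (A k))) := by
            rw [hC, hS]
            exact hFs
        _ = ∑ k ∈ Icc 2 (n-1), dist (v k) (v (k+1)) * A k := by
            apply Finset.sum_congr rfl
            intro k hk
            rw [Finset.mem_Icc] at hk
            have hrpos : 0 < dist (v k) (v (k+1)) := dist_pos.2 (hne k (by omega) (by omega))
            have hcA := hcosA k (by omega)
            have hAθ := hA_le_θ k (by omega)
            have hA0 := hA_nonneg k
            rw [mul_div_mul_left _ _ hrpos.ne']
            rw [show Real.sin (A k) / Real.cos (A k) = Real.tan (A k) from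
              (Real.tan_eq_sin_div_cos _).symm]
            rw [Real.arctan_tan (by linarith) (by linarith)]
            rw [show (dist (v k) (v (k+1)) * Real.cos (A k))^2 +
                (dist (v k) (v (k+1)) * Real.sin (A k))^2 = (dist (v k) (v (k+1)))^2 by
              linear_combination (dist (v k) (v (k+1)))^2 * Real.sin_sq_add_cos_sq (A k)]
            rw [Real.sqrt_sq hrpos.le]
    -- geometric decay of the tails
    have hh1 : (0:ℝ) < h - 1 := by linarith
    have hquot : (1:ℝ) ≤ h / (h-1) := by
      rw [le_div_iff₀ hh1]; linarith
    have hgeom := geom_tail n hn h hh v hedge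
    -- exchanging the order of summation
    have hswap : ∑ k ∈ Icc 2 (n-1), dist (v k) (v (k+1)) * A k
        = ∑ j ∈ Icc 2 (n-1), beta (v (j-1)) (v j) (v (j+1)) *
            ∑ k ∈ Icc j (n-1), dist (v k) (v (k+1)) := by
      simp only [hAdef]
      rw [show (∑ k ∈ Icc 2 (n-1), dist (v k) (v (k+1)) *
            ∑ j ∈ Icc 2 k, beta (v (j-1)) (v j) (v (j+1)))
          = ∑ k ∈ Icc 2 (n-1), ∑ j ∈ Icc 2 k,
              dist (v k) (v (k+1)) * beta (v (j-1)) (v j) (v (j+1)) from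
        Finset.sum_congr rfl fun k _ => Finset.mul_sum _ _ _]
      rw [Finset.sum_comm' (s' := fun j => Icc j (n-1)) (t' := Icc 2 (n-1)) (by
        intro x y
        simp only [Finset.mem_Icc]
        omega)]
      apply Finset.sum_congr rfl
      intro j _
      rw [Finset.mul_sum]
      apply Finset.sum_congr rfl
      intro k _
      ring
    have hfinal : ∑ k ∈ Icc 2 (n-1), dist (v k) (v (k+1)) * A k ≤ (h/(h-1)) * G := by
      rw [hswap, hG, Finset.mul_sum]
      apply Finset.sum_le_sum
      intro j hj
      rw [Finset.mem_Icc] at hj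
      calc beta (v (j-1)) (v j) (v (j+1)) * ∑ k ∈ Icc j (n-1), dist (v k) (v (k+1))
          ≤ beta (v (j-1)) (v j) (v (j+1)) * (dist (v j) (v (j+1)) * (h/(h-1))) :=
            mul_le_mul_of_nonneg_left (hgeom (n-1-j) j (by omega) (by omega) le_rfl)
              (hbeta_nn _ _ _)
        _ = h/(h-1) * (dist (v j) (v (j+1)) * beta (v (j-1)) (v j) (v (j+1))) := by ring
    calc βs * ‖(v n - v 2 : Pt)‖
        ≤ ∑ k ∈ Icc 2 (n-1), dist (v k) (v (k+1)) * A k := hkey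
      _ ≤ (h/(h-1)) * G := hfinal
      _ ≤ (h/(h-1))^n * G := by
          apply mul_le_mul_of_nonneg_right _ hGnn
          exact le_self_pow₀ (by linarith [hquot]) (by omega)
end
end
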